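/- arXiv:1512.00766 — 3 statements merged into one kernel-verified Lean document; each statement's English description precedes it below -/
import Mathlib

section
/- The second-order partial derivative ∂²IMM_q^n / (∂(x_β)^r_s ∂(x_α)^j_k) equals: 0 if α = β; 0 if β = α−1 and k ≠ r; 0 if β = α+1 and s ≠ j; the (j,s)-entry of X_{α−2}···X_1 X_n···X_{α+1} if β = α−1 and k = r; the (r,k)-entry of X_{α−1}···X_1 X_n···X_{α+2} if β = α+1 and s = j; and (X_{α−1}···X_{β+1})^k_r · (X_{β−1}···X_{α+1})^s_j if β ∉ {α, α−1, α+1}. -/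
open MvPolynomial

/-- The iterated matrix multiplication polynomial `IMM_q^n`: `trace (Xₙ ⋯ X₁)`,
in variables `(α, i, j)` standing for the `(i,j)`-entry of `X_α`. -/
noncomputable def IMM (q n : ℕ) [NeZero n] : MvPolynomial (Fin n × Fin q × Fin q) ℂ :=
  ∑ ℓ : Fin n → Fin q, ∏ α : Fin n, X (α, ℓ (α + 1), ℓ α)

/-- A point of `(Mat_q)^n` read off from a point of the variable space. -/
def toMat {q n : ℕ} (v : Fin n × Fin q × Fin q → ℂ) (β : Fin n) : Matrix (Fin q) (Fin q) ℂ :=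
  Matrix.of fun a b => v (β, a, b)

/-- The cyclic segment product `X_a X_{a-1} ⋯ X_b` (indices descending cyclically
from `a` to `b`). -/
noncomputable def segProd {q : ℕ} (n : ℕ) [NeZero n] (M : Fin n → Matrix (Fin q) (Fin q) ℂ)
    (a b : Fin n) : Matrix (Fin q) (Fin q) ℂ :=
  (List.ofFn (fun k : Fin (((a - b : Fin n) : ℕ) + 1) => M (a - Fin.ofNat n (k : ℕ)))).prod

open Fin.NatCast Fin.CommRing

open Matrix

section Aux

variable {q n : ℕ} [NeZero n]


noncomputable def cprod (M : Fin n → Matrix (Fin q) (Fin q) ℂ) : Fin n → ℕ → Matrix (Fin q) (Fin q) ℂ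
  | _, 0 => 1
  | a, m+1 => M a * cprod M (a-1) m

@[simp] lemma cprod_zero (M : Fin n → Matrix (Fin q) (Fin q) ℂ) (a : Fin n) : cprod M a 0 = 1 := rfl

lemma cprod_succ (M : Fin n → Matrix (Fin q) (Fin q) ℂ) (a : Fin n) (m : ℕ) :
    cprod M a (m+1) = M a * cprod M (a-1) m := rfl

lemma cprod_split (M : Fin n → Matrix (Fin q) (Fin q) ℂ) (a : Fin n) (m₁ m₂ : ℕ) :
    cprod M a (m₁ + m₂) = cprod M a m₁ * cprod M (a - (m₁ : Fin n)) m₂ := by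
  induction m₁ generalizing a with
  | zero => simp
  | succ m ih =>
      have : m + 1 + m₂ = (m + m₂) + 1 := by ring
      rw [this, cprod_succ, ih, cprod_succ, mul_assoc]
      congr 2
      push_cast
      ring

lemma cprod_congr (M N : Fin n → Matrix (Fin q) (Fin q) ℂ) (a : Fin n) (m : ℕ)
    (h : ∀ i : ℕ, i < m → M (a - (i : Fin n)) = N (a - (i : Fin n))) :
    cprod M a m = cprod N a m := by
  induction m generalizing a with
  | zero => simp
  | succ m ih =>
      rw [cprod_succ, cprod_succ, ih]
      · have h0 := h 0 (Nat.succ_pos m)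
        simp at h0
        rw [h0]
      · intro i hi
        have := h (i+1) (by omega)
        push_cast at this ⊢
        rw [sub_sub, add_comm]
        exact this

lemma ofFn_prod_eq_cprod (M : Fin n → Matrix (Fin q) (Fin q) ℂ) (a : Fin n) (m : ℕ) :
    (List.ofFn (fun k : Fin m => M (a - ((k : ℕ) : Fin n)))).prod = cprod M a m := by
  induction m generalizing a with
  | zero => simp
  | succ m ih =>
      rw [List.ofFn_succ, List.prod_cons, cprod_succ]
      congr 1
      · simp
      · rw [← ih]
        have hfn : (fun i : Fin m => M (a - ((i.succ : ℕ) : Fin n)))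
            = fun i : Fin m => M (a - 1 - ((i : ℕ) : Fin n)) := by
          funext i
          congr 1
          have : ((i.succ : ℕ) : Fin n) = ((i : ℕ) : Fin n) + 1 := by
            rw [Fin.val_succ]; push_cast; ring
          rw [this, sub_sub, add_comm]
        rw [hfn]

lemma segProd_eq_cprod (M : Fin n → Matrix (Fin q) (Fin q) ℂ) (a b : Fin n) :
    segProd n M a b = cprod M a (((a - b : Fin n) : ℕ) + 1) := by
  rw [segProd]
  exact ofFn_prod_eq_cprod M a _

lemma cprod_entry (M : Fin n → Matrix (Fin q) (Fin q) ℂ) (a : Fin n) (m : ℕ) (x y : Fin q) :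
    cprod M a m x y
      = ∑ g : Fin (m+1) → Fin q,
          if g 0 = x ∧ g (Fin.last m) = y then
            ∏ t : Fin m, M (a - ((t : ℕ) : Fin n)) (g t.castSucc) (g t.succ)
          else 0 := by
  induction m generalizing a x with
  | zero =>
      rw [← (Equiv.funUnique (Fin 1) (Fin q)).symm.sum_comp]
      have key : ∀ c : Fin q,
          (if ((Equiv.funUnique (Fin 1) (Fin q)).symm c) 0 = x ∧
              ((Equiv.funUnique (Fin 1) (Fin q)).symm c) (Fin.last 0) = y then
            ∏ t : Fin 0, M (a - ((t : ℕ) : Fin n))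
              (((Equiv.funUnique (Fin 1) (Fin q)).symm c) t.castSucc)
              (((Equiv.funUnique (Fin 1) (Fin q)).symm c) t.succ) else 0)
          = if c = x ∧ c = y then 1 else 0 := by
        intro c; rfl
      simp only [key, cprod_zero, Matrix.one_apply]
      by_cases h : x = y
      · subst h
        simp
      · rw [if_neg h]
        symm
        apply Finset.sum_eq_zero
        intro c _
        rw [if_neg]
        rintro ⟨h1, h2⟩
        exact h (h1 ▸ h2 ▸ rfl)
  | succ m ih =>
      rw [← (Fin.consEquiv (fun _ : Fin (m+2) => Fin q)).sum_comp]
      rw [Fintype.sum_prod_type]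
      simp only [Fin.consEquiv_apply]
      have hsplit : ∀ (c : Fin q) (g' : Fin (m+1) → Fin q),
          (∏ t : Fin (m+1), M (a - ((t : ℕ) : Fin n))
            ((Fin.cons c g' : Fin (m+2) → Fin q) t.castSucc)
            ((Fin.cons c g' : Fin (m+2) → Fin q) t.succ))
            = M a c (g' 0) * ∏ t : Fin m, M ((a-1) - ((t : ℕ) : Fin n)) (g' t.castSucc) (g' t.succ) := by
        intro c g'
        rw [Fin.prod_univ_succ]
        have e0 : M (a - (((0 : Fin (m+1)) : ℕ) : Fin n))
            ((Fin.cons c g' : Fin (m+2) → Fin q) (0 : Fin (m+1)).castSucc)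
            ((Fin.cons c g' : Fin (m+2) → Fin q) (0 : Fin (m+1)).succ) = M a c (g' 0) := by
          norm_num
        rw [e0]
        congr 1
        apply Finset.prod_congr rfl
        intro t _
        have h2 : (a - (((t.succ : Fin (m+1)) : ℕ) : Fin n)) = (a - 1 - ((t : ℕ) : Fin n)) := by
          rw [Fin.val_succ]; push_cast; rw [sub_sub, add_comm]
        rw [h2]
        rfl
      have hc0 : ∀ (c : Fin q) (g' : Fin (m+1) → Fin q),
          (Fin.cons c g' : Fin (m+2) → Fin q) (0 : Fin (m+2)) = c := fun _ _ => rfl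
      have hcl : ∀ (c : Fin q) (g' : Fin (m+1) → Fin q),
          (Fin.cons c g' : Fin (m+2) → Fin q) (Fin.last (m+1)) = g' (Fin.last m) := by
        intro c g'
        rw [← Fin.succ_last]
        rfl
      calc cprod M a (m+1) x y
          = ∑ c, M a x c * cprod M (a-1) m c y := by rw [cprod_succ, Matrix.mul_apply]
        _ = ∑ g' : Fin (m+1) → Fin q, (if g' (Fin.last m) = y then
              M a x (g' 0) * ∏ t : Fin m, M ((a-1) - ((t : ℕ) : Fin n)) (g' t.castSucc) (g' t.succ)
              else 0) := by
            have : ∀ c, M a x c * cprod M (a-1) m c y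
                = ∑ g' : Fin (m+1) → Fin q, (if g' 0 = c ∧ g' (Fin.last m) = y then
                    M a x c * ∏ t : Fin m, M ((a-1) - ((t : ℕ) : Fin n)) (g' t.castSucc) (g' t.succ)
                  else 0) := by
              intro c
              rw [ih, Finset.mul_sum]
              apply Finset.sum_congr rfl
              intro g' _
              rw [mul_ite, mul_zero]
            simp only [this]
            rw [Finset.sum_comm]
            apply Finset.sum_congr rfl
            intro g' _
            simp only [ite_and]
            rw [Finset.sum_ite_eq]
            simp
        _ = ∑ c, ∑ g' : Fin (m+1) → Fin q, (if c = x ∧ g' (Fin.last m) = y then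
              M a c (g' 0) * ∏ t : Fin m, M ((a-1) - ((t : ℕ) : Fin n)) (g' t.castSucc) (g' t.succ)
              else 0) := by
            symm
            rw [Finset.sum_comm]
            apply Finset.sum_congr rfl
            intro g' _
            simp only [ite_and]
            rw [Finset.sum_ite_eq']
            simp
        _ = _ := by
            apply Finset.sum_congr rfl; intro c _
            apply Finset.sum_congr rfl; intro g' _
            rw [hsplit c g', hc0 c g', hcl c g']

lemma neg_one_succ : (-1 : Fin n).succ = Fin.last n := by
  obtain ⟨m, rfl⟩ : ∃ m, n = m + 1 := ⟨n - 1, (Nat.succ_pred_eq_of_pos (Nat.pos_of_ne_zero (NeZero.ne n))).symm⟩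
  apply Fin.ext
  rw [Fin.val_succ, Fin.coe_neg_one, Fin.val_last]

lemma trace_cprod (M : Fin n → Matrix (Fin q) (Fin q) ℂ) (a : Fin n) :
    Matrix.trace (cprod M a n) = ∑ ℓ : Fin n → Fin q, ∏ γ : Fin n, M γ (ℓ (γ+1)) (ℓ γ) := by
  rw [Matrix.trace]
  calc ∑ x, (cprod M a n).diag x
      = ∑ x, ∑ g : Fin (n+1) → Fin q, (if g 0 = x ∧ g (Fin.last n) = x then
          ∏ t : Fin n, M (a - ((t:ℕ) : Fin n)) (g t.castSucc) (g t.succ) else 0) := by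
        apply Finset.sum_congr rfl; intro x _
        rw [Matrix.diag_apply, cprod_entry]
    _ = ∑ g : Fin (n+1) → Fin q, (if g (Fin.last n) = g 0 then
          ∏ t : Fin n, M (a - ((t:ℕ) : Fin n)) (g t.castSucc) (g t.succ) else 0) := by
        rw [Finset.sum_comm]
        apply Finset.sum_congr rfl; intro g _
        simp only [ite_and]
        rw [Finset.sum_ite_eq]
        simp
    _ = ∑ ℓ : Fin n → Fin q, ∏ γ : Fin n, M γ (ℓ (γ+1)) (ℓ γ) := by
        rw [← Finset.sum_filter]
        symm
        apply Finset.sum_nbij'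
          (i := fun ℓ : Fin n → Fin q => fun idx : Fin (n+1) => ℓ (a + 1 - ((idx : ℕ) : Fin n)))
          (j := fun (g : Fin (n+1) → Fin q) => fun γ : Fin n => g ((a - γ).succ))
        · intro ℓ _
          simp only [Finset.mem_filter, Finset.mem_univ, true_and]
          congr 1
          rw [Fin.val_last, Fin.natCast_self]
          norm_num
        · intro g _
          exact Finset.mem_univ _
        · intro ℓ _
          funext γ
          simp only []
          congr 1
          rw [Fin.val_succ, Nat.cast_add, Nat.cast_one, Fin.cast_val_eq_self]
          ring
        · intro g hg
          simp only [Finset.mem_filter, Finset.mem_univ, true_and] at hg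
          funext idx
          simp only []
          induction idx using Fin.cases with
          | zero =>
              have h0 : (((0 : Fin (n+1)) : ℕ) : Fin n) = 0 := by norm_num
              rw [h0, sub_zero]
              have h1 : a - (a + 1) = -1 := by ring
              rw [h1, neg_one_succ]
              exact hg
          | succ i =>
              have h2 : a + 1 - ((((i.succ : Fin (n+1)) : ℕ)) : Fin n) = a - i := by
                rw [Fin.val_succ, Nat.cast_add, Nat.cast_one, Fin.cast_val_eq_self]
                ring
              rw [h2]
              have h3 : a - (a - i) = i := by ring
              rw [h3]
        · intro ℓ _
          rw [← Equiv.prod_comp (Equiv.subLeft a) (fun γ => M γ (ℓ (γ+1)) (ℓ γ))]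
          apply Finset.prod_congr rfl
          intro t _
          simp only [Equiv.subLeft_apply]
          congr 1
          · rw [Fin.cast_val_eq_self]
          · congr 1
            rw [Fin.coe_castSucc, Fin.cast_val_eq_self]
            ring
          · congr 1
            rw [Fin.val_succ, Nat.cast_add, Nat.cast_one, Fin.cast_val_eq_self]
            ring

lemma prod_X_monomial {σ : Type*} [DecidableEq σ] {ι : Type*} [DecidableEq ι] (S : Finset ι) (f : ι → σ) :
    (∏ γ ∈ S, (X (f γ) : MvPolynomial σ ℂ)) = monomial (∑ γ ∈ S, Finsupp.single (f γ) 1) 1 := by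
  induction S using Finset.induction_on with
  | empty => simp [monomial_zero']
  | insert _ _ hx ih =>
      have hX : ∀ t : σ, (X t : MvPolynomial σ ℂ) = monomial (Finsupp.single t 1) 1 := by
        intro t; rw [← X_pow_eq_monomial, pow_one]
      rw [Finset.prod_insert hx, Finset.sum_insert hx, ih, hX, monomial_mul, one_mul]

noncomputable def eF {q n : ℕ} [NeZero n] (ℓ : Fin n → Fin q) : (Fin n × Fin q × Fin q) →₀ ℕ :=
  ∑ γ : Fin n, Finsupp.single (γ, ℓ (γ+1), ℓ γ) 1

lemma eF_apply (ℓ : Fin n → Fin q) (δ : Fin n) (x y : Fin q) :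
    eF ℓ (δ, x, y) = if ℓ (δ+1) = x ∧ ℓ δ = y then 1 else 0 := by
  rw [eF, Finsupp.finset_sum_apply]
  rw [Finset.sum_eq_single δ]
  · rw [Finsupp.single_apply]
    congr 1
    simp [Prod.ext_iff]
  · intro γ _ hγ
    rw [Finsupp.single_apply, if_neg]
    simp only [Prod.mk.injEq]
    rintro ⟨h, -⟩
    exact hγ h
  · intro h
    exact absurd (Finset.mem_univ δ) h

lemma IMM_eq : IMM q n = ∑ ℓ : Fin n → Fin q, monomial (eF ℓ) 1 := by
  rw [IMM]
  apply Finset.sum_congr rfl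
  intro ℓ _
  rw [prod_X_monomial, eF]

lemma eval_pderiv2_same (α : Fin n) (j k r s : Fin q) (v : Fin n × Fin q × Fin q → ℂ) :
    MvPolynomial.eval v
      (pderiv ((α, r, s) : Fin n × Fin q × Fin q) (pderiv (α, j, k) (IMM q n))) = 0 := by
  rw [IMM_eq, map_sum, map_sum, map_sum]
  apply Finset.sum_eq_zero
  intro ℓ _
  rw [pderiv_monomial, pderiv_monomial]
  by_cases hc : ((α, j, k) : Fin n × Fin q × Fin q) = (α, r, s)
  · rw [← hc, Finsupp.tsub_apply, Finsupp.single_apply, if_pos rfl, eF_apply]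
    by_cases h : ℓ (α+1) = j ∧ ℓ α = k
    · rw [if_pos h, Nat.sub_self, Nat.cast_zero, mul_zero, monomial_zero, map_zero]
    · rw [if_neg h, Nat.cast_zero, one_mul, zero_mul, monomial_zero, map_zero]
  · rw [Finsupp.tsub_apply, Finsupp.single_apply, if_neg hc, Nat.sub_zero]
    rw [eF_apply, eF_apply]
    have hor : ¬(ℓ (α+1) = r ∧ ℓ α = s) ∨ ¬(ℓ (α+1) = j ∧ ℓ α = k) := by
      by_contra hcon
      push_neg at hcon
      obtain ⟨h2, h1⟩ := hcon
      exact hc (by rw [← h1.1, ← h1.2, ← h2.1, ← h2.2])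
    rcases hor with h | h
    · rw [if_neg h, Nat.cast_zero, mul_zero, monomial_zero, map_zero]
    · rw [if_neg h, Nat.cast_zero, one_mul, zero_mul, monomial_zero, map_zero]

lemma eval_pderiv2_ne (α β : Fin n) (hab : β ≠ α) (j k r s : Fin q)
    (v : Fin n × Fin q × Fin q → ℂ) :
    MvPolynomial.eval v
      (pderiv ((β, r, s) : Fin n × Fin q × Fin q) (pderiv (α, j, k) (IMM q n)))
      = ∑ ℓ : Fin n → Fin q, ∏ γ : Fin n,
          (Function.update (Function.update (toMat v) α (Matrix.single j k 1)) β
            (Matrix.single r s 1)) γ (ℓ (γ+1)) (ℓ γ) := by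
  have hab' : α ≠ β := fun h => hab h.symm
  have hi12 : ((α, j, k) : Fin n × Fin q × Fin q) ≠ (β, r, s) := fun h =>
    hab' (Prod.ext_iff.1 h).1
  rw [IMM_eq, map_sum, map_sum, map_sum]
  apply Finset.sum_congr rfl
  intro ℓ _
  rw [pderiv_monomial, pderiv_monomial]
  rw [Finsupp.tsub_apply, Finsupp.single_apply, if_neg hi12, Nat.sub_zero, one_mul]
  set W := Function.update (Function.update (toMat v) α (Matrix.single j k 1)) β
    (Matrix.single r s 1) with hW
  have hWα : W α = Matrix.single j k 1 := by
    rw [hW, Function.update_of_ne hab', Function.update_self]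
  have hWβ : W β = Matrix.single r s 1 := by
    rw [hW, Function.update_self]
  have hWo : ∀ γ : Fin n, γ ≠ α → γ ≠ β → W γ = toMat v γ := by
    intro γ h1 h2
    rw [hW, Function.update_of_ne h2, Function.update_of_ne h1]
  by_cases h1 : ℓ (α+1) = j ∧ ℓ α = k
  · by_cases h2 : ℓ (β+1) = r ∧ ℓ β = s
    · have hc1 : eF ℓ (α, j, k) = 1 := by rw [eF_apply, if_pos h1]
      have hc2 : eF ℓ (β, r, s) = 1 := by rw [eF_apply, if_pos h2]
      rw [hc1, hc2]
      have hpair : ({α, β} : Finset (Fin n)) ⊆ Finset.univ := Finset.subset_univ _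
      have hsplit : eF ℓ = (∑ γ ∈ Finset.univ \ {α, β}, Finsupp.single (γ, ℓ (γ+1), ℓ γ) 1)
          + Finsupp.single ((α, j, k) : Fin n × Fin q × Fin q) 1
          + Finsupp.single ((β, r, s) : Fin n × Fin q × Fin q) 1 := by
        rw [eF, ← Finset.sum_sdiff hpair, Finset.sum_pair hab', h1.1, h1.2, h2.1, h2.2, add_assoc]
      have hexp : eF ℓ - Finsupp.single ((α, j, k) : Fin n × Fin q × Fin q) 1
          - Finsupp.single ((β, r, s) : Fin n × Fin q × Fin q) 1
          = ∑ γ ∈ Finset.univ \ {α, β}, Finsupp.single (γ, ℓ (γ+1), ℓ γ) 1 := by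
        rw [hsplit, add_right_comm, add_tsub_cancel_right, add_tsub_cancel_right]
      rw [hexp]
      simp only [Nat.cast_one, mul_one]
      rw [← prod_X_monomial (Finset.univ \ {α, β}) (fun γ => (γ, ℓ (γ+1), ℓ γ))]
      rw [map_prod]
      simp only [eval_X]
      rw [← Finset.prod_sdiff hpair, Finset.prod_pair hab', hWα, hWβ, h1.1, h1.2, h2.1, h2.2,
        Matrix.single_apply_same, Matrix.single_apply_same, mul_one, mul_one]
      apply Finset.prod_congr rfl
      intro γ hγ
      rw [Finset.mem_sdiff, Finset.mem_insert, Finset.mem_singleton] at hγ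
      push_neg at hγ
      rw [hWo γ hγ.2.1 hγ.2.2]
      rfl
    · have hc2 : eF ℓ (β, r, s) = 0 := by rw [eF_apply, if_neg h2]
      rw [hc2, Nat.cast_zero, mul_zero, monomial_zero, map_zero]
      symm
      apply Finset.prod_eq_zero (Finset.mem_univ β)
      rw [hWβ]
      rw [Matrix.single, Matrix.of_apply, if_neg]
      rintro ⟨u1, u2⟩
      exact h2 ⟨u1.symm, u2.symm⟩
  · have hc1 : eF ℓ (α, j, k) = 0 := by rw [eF_apply, if_neg h1]
    rw [hc1, Nat.cast_zero, zero_mul, monomial_zero, map_zero]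
    symm
    apply Finset.prod_eq_zero (Finset.mem_univ α)
    rw [hWα]
    rw [Matrix.single, Matrix.of_apply, if_neg]
    rintro ⟨u1, u2⟩
    exact h1 ⟨u1.symm, u2.symm⟩

lemma val_neg_one' : ((-1 : Fin n) : ℕ) = n - 1 := by
  obtain ⟨m, rfl⟩ : ∃ m, n = m + 1 :=
    ⟨n - 1, (Nat.succ_pred_eq_of_pos (Nat.pos_of_ne_zero (NeZero.ne n))).symm⟩
  rw [Fin.coe_neg_one]
  omega

lemma trace_EPEP (A B : Matrix (Fin q) (Fin q) ℂ) (j k r s : Fin q) :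
    Matrix.trace (Matrix.single j k 1 *
      (A * (Matrix.single r s 1 * B))) = A k r * B s j := by
  simp [Matrix.trace, Matrix.diag, Matrix.mul_apply, Matrix.single, ite_and,
    Finset.mul_sum, Finset.sum_ite_eq, mul_ite, mul_zero, ite_mul, zero_mul]

lemma cprod_one (M : Fin n → Matrix (Fin q) (Fin q) ℂ) (a : Fin n) :
    cprod M a 1 = M a := by
  rw [cprod_succ, cprod_zero, mul_one]

lemma eval_pderiv2_formula (α β : Fin n) (hab : β ≠ α) (j k r s : Fin q)
    (v : Fin n × Fin q × Fin q → ℂ) :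
    MvPolynomial.eval v
      (pderiv ((β, r, s) : Fin n × Fin q × Fin q) (pderiv (α, j, k) (IMM q n)))
      = (cprod (toMat v) (α - 1) (((α - β : Fin n) : ℕ) - 1)) k r
        * (cprod (toMat v) (β - 1) (n - 1 - ((α - β : Fin n) : ℕ))) s j := by
  set d : ℕ := ((α - β : Fin n) : ℕ) with hd
  have hdn : d < n := (α - β).isLt
  have hd0 : d ≠ 0 := by
    intro h
    apply hab
    have h1 : α - β = 0 := Fin.ext (by rw [← hd, h, Fin.val_zero])
    exact (sub_eq_zero.mp h1).symm
  have hcast : ((d : ℕ) : Fin n) = α - β := Fin.cast_val_eq_self _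
  set W := Function.update (Function.update (toMat v) α (Matrix.single j k 1)) β
    (Matrix.single r s 1) with hW
  have hab' : α ≠ β := fun h => hab h.symm
  have hWα : W α = Matrix.single j k 1 := by
    rw [hW, Function.update_of_ne hab', Function.update_self]
  have hWβ : W β = Matrix.single r s 1 := by
    rw [hW, Function.update_self]
  have hWt : ∀ t : ℕ, 0 < t → t < n → t ≠ d → W (α - (t : Fin n)) = toMat v (α - (t : Fin n)) := by
    intro t h1 h2 h3
    have hne1 : α - (t : Fin n) ≠ α := by
      intro h
      have h4 : ((t : ℕ) : Fin n) = 0 := by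
        have := sub_eq_self.mp h
        exact this
      rw [Fin.natCast_eq_zero] at h4
      have := Nat.le_of_dvd h1 h4
      omega
    have hne2 : α - (t : Fin n) ≠ β := by
      intro h
      have h4 : ((t : ℕ) : Fin n) = α - β := by rw [← h]; ring
      have h5 : t = d := by
        have h6 := congrArg Fin.val h4
        rw [Fin.val_cast_of_lt h2, ← hd] at h6
        exact h6
      exact h3 h5
    rw [hW, Function.update_of_ne hne2, Function.update_of_ne hne1]
  have hsum : n = 1 + ((d - 1) + (1 + (n - 1 - d))) := by omega
  have hβeq : (α - 1) - ((d - 1 : ℕ) : Fin n) = β := by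
    have h7 : ((d - 1 : ℕ) : Fin n) = (α - β) - 1 := by
      rw [Nat.cast_sub (by omega : 1 ≤ d), hcast, Nat.cast_one]
    rw [h7]
    ring
  have e1 : cprod W α n
      = W α * (cprod W (α-1) (d-1) * (W β * cprod W (β-1) (n-1-d))) := by
    rw [congrArg (cprod W α) hsum]
    rw [cprod_split W α 1, cprod_one, Nat.cast_one, cprod_split W (α-1) (d-1), hβeq,
      cprod_split W β 1, cprod_one, Nat.cast_one]
  have e2 : cprod W (α-1) (d-1) = cprod (toMat v) (α-1) (d-1) := by
    apply cprod_congr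
    intro i hi
    have h8 : (α - 1) - ((i : ℕ) : Fin n) = α - (((i+1 : ℕ)) : Fin n) := by
      push_cast; ring
    rw [h8]
    exact hWt (i+1) (by omega) (by omega) (by omega)
  have e3 : cprod W (β-1) (n-1-d) = cprod (toMat v) (β-1) (n-1-d) := by
    apply cprod_congr
    intro i hi
    have h9 : (β - 1) - ((i : ℕ) : Fin n) = α - (((d + 1 + i : ℕ)) : Fin n) := by
      have : β = α - ((d : ℕ) : Fin n) := by rw [hcast]; ring
      rw [this]
      push_cast; ring
    rw [h9]
    exact hWt (d+1+i) (by omega) (by omega) (by omega)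
  rw [eval_pderiv2_ne α β hab j k r s v, ← trace_cprod W α, e1, ← e2, ← e3, hWα, hWβ,
    trace_EPEP, e2, e3]


end Aux

/-- the second-order partial derivative
`∂² IMM_q^n / ∂(x_β)^r_s ∂(x_α)^j_k` equals: `0` if `β = α`; `0` if `β = α-1, k ≠ r`;
`0` if `β = α+1, s ≠ j`; the `(s,j)`-entry of `X_{α-2}⋯X_1Xₙ⋯X_{α+1}` if `β = α-1, k = r`;
the `(k,r)`-entry of `X_{α-1}⋯X_1Xₙ⋯X_{α+2}` if `β = α+1, s = j`; and
`(X_{α-1}⋯X_{β+1})^k_r ⬝ (X_{β-1}⋯X_{α+1})^s_j` if `β ∉ {α, α±1}`.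
(Here `(x_α)^i_j` is the `(i,j)`-entry of `X_α` and `(Y)^i_j` the `(i,j)`-entry of `Y`.) -/
theorem stmt_11 (q n : ℕ) (hn : 3 ≤ n) [NeZero n] (α β : Fin n) (j k r s : Fin q)
    (v : Fin n × Fin q × Fin q → ℂ) :
    MvPolynomial.eval v
        (MvPolynomial.pderiv (β, r, s) (MvPolynomial.pderiv (α, j, k) (IMM q n)))
      = if β = α then 0
        else if β = α - 1 then
          (if k = r then segProd n (toMat v) (α - 2) (α + 1) s j else 0)
        else if β = α + 1 then
          (if s = j then segProd n (toMat v) (α - 1) (α + 2) k r else 0)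
        else segProd n (toMat v) (α - 1) (β + 1) k r
              * segProd n (toMat v) (β - 1) (α + 1) s j := by
  by_cases hβα : β = α
  · rw [if_pos hβα, hβα]
    exact eval_pderiv2_same α j k r s v
  · rw [if_neg hβα, eval_pderiv2_formula α β hβα j k r s v]
    set d : ℕ := ((α - β : Fin n) : ℕ) with hd
    have hdn : d < n := (α - β).isLt
    have hd0 : d ≠ 0 := by
      intro h
      exact hβα (sub_eq_zero.mp (Fin.ext (by rw [← hd, h, Fin.val_zero]))).symm
    have hcast : ((d : ℕ) : Fin n) = α - β := Fin.cast_val_eq_self _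
    by_cases h1 : β = α - 1
    · rw [if_pos h1]
      have hd1 : d = 1 := by
        have : α - β = 1 := by rw [h1]; ring
        rw [hd, this, Fin.val_one', Nat.mod_eq_of_lt (by omega)]
      have hβ1 : β - 1 = α - 2 := by rw [h1]; ring
      have hseg : segProd n (toMat v) (α - 2) (α + 1) = cprod (toMat v) (α - 2) (n - 2) := by
        rw [segProd_eq_cprod]
        have hv : α - 2 - (α + 1) = ((n - 3 : ℕ) : Fin n) := by
          rw [Nat.cast_sub (by omega : 3 ≤ n), Fin.natCast_self]
          push_cast
          ring
        have harg : ((α - 2 - (α + 1) : Fin n) : ℕ) + 1 = n - 2 := by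
          rw [hv, Fin.val_cast_of_lt (show n - 3 < n by omega)]
          omega
        rw [harg]
      rw [hd1, hβ1, hseg, cprod_zero, show n - 1 - 1 = n - 2 from by omega]
      by_cases hkr : k = r <;> simp [Matrix.one_apply, hkr]
    · rw [if_neg h1]
      have hdne1 : d ≠ 1 := by
        intro h
        apply h1
        have : α - β = 1 := by rw [← hcast, h, Nat.cast_one]
        rw [← this]; ring
      by_cases h2 : β = α + 1
      · rw [if_pos h2]
        have hdn1 : d = n - 1 := by
          have : α - β = -1 := by rw [h2]; ring
          rw [hd, this, val_neg_one']
        have hseg : segProd n (toMat v) (α - 1) (α + 2) = cprod (toMat v) (α - 1) (n - 2) := by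
          rw [segProd_eq_cprod]
          have hv : α - 1 - (α + 2) = ((n - 3 : ℕ) : Fin n) := by
            rw [Nat.cast_sub (by omega : 3 ≤ n), Fin.natCast_self]
            push_cast
            ring
          have harg : ((α - 1 - (α + 2) : Fin n) : ℕ) + 1 = n - 2 := by
            rw [hv, Fin.val_cast_of_lt (show n - 3 < n by omega)]
            omega
          rw [harg]
        have hz : n - 1 - d = 0 := by omega
        have hd2 : d - 1 = n - 2 := by omega
        rw [hdn1, hseg]
        rw [show n - 1 - (n-1) = 0 from by omega, show n - 1 - 1 = n - 2 from by omega, cprod_zero]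
        by_cases hsj : s = j <;> simp [Matrix.one_apply, hsj, mul_comm]
      · rw [if_neg h2]
        have hdnn1 : d ≠ n - 1 := by
          intro h
          apply h2
          have h3 : α - β = -1 := by
            rw [← hcast, h, Nat.cast_sub (by omega : 1 ≤ n), Fin.natCast_self, Nat.cast_one]
            ring
          have h5 : β = α - (α - β) := by ring
          rw [h5, h3]
          ring
        have hseg1 : segProd n (toMat v) (α - 1) (β + 1) = cprod (toMat v) (α - 1) (d - 1) := by
          rw [segProd_eq_cprod]
          have hv : α - 1 - (β + 1) = ((d - 2 : ℕ) : Fin n) := by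
            rw [Nat.cast_sub (by omega : 2 ≤ d), hcast]
            push_cast
            ring
          have harg : ((α - 1 - (β + 1) : Fin n) : ℕ) + 1 = d - 1 := by
            rw [hv, Fin.val_cast_of_lt (show d - 2 < n by omega)]
            omega
          rw [harg]
        have hseg2 : segProd n (toMat v) (β - 1) (α + 1) = cprod (toMat v) (β - 1) (n - 1 - d) := by
          rw [segProd_eq_cprod]
          have hv : β - 1 - (α + 1) = ((n - d - 2 : ℕ) : Fin n) := by
            rw [Nat.cast_sub (by omega : 2 ≤ n - d), Nat.cast_sub (by omega : d ≤ n),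
              Fin.natCast_self, hcast]
            push_cast
            ring
          have harg : ((β - 1 - (α + 1) : Fin n) : ℕ) + 1 = n - 1 - d := by
            rw [hv, Fin.val_cast_of_lt (show n - d - 2 < n by omega)]
            omega
          rw [harg]
        rw [hseg1, hseg2]
end

section
/- Fix 0 ≤ r ≤ q. Let Z̃ = {(X,Y,E) ∈ Mat_q(ℂ)² × Gr(r,ℂ^q) : Im(X) ⊆ E ⊆ ker(Y)}. Then the projection (X,Y,E) ↦ E makes Z̃ a vector bundle over the Grassmannian Gr(r,ℂ^q) with fibers of dimension q², and the projection (X,Y,E) ↦ (X,Y) maps Z̃ surjectively onto Z = {(X,Y) : rank X ≤ r, rank Y ≤ q−r, YX = 0}, bijectively over the open locus where rank X = r and rank Y = q−r. -/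
open Matrix Module LinearMap

section aux

variable {V : Type*} [AddCommGroup V] [Module ℂ V] [FiniteDimensional ℂ V]

lemma aux_exists_between {p W : Submodule ℂ V} (hpW : p ≤ W) {n : ℕ}
    (h1 : finrank ℂ p ≤ n) (h2 : n ≤ finrank ℂ W) :
    ∃ E : Submodule ℂ V, p ≤ E ∧ E ≤ W ∧ finrank ℂ E = n := by
  induction n, h1 using Nat.le_induction with
  | base => exact ⟨p, le_rfl, hpW, rfl⟩
  | succ n hn ih =>
    obtain ⟨E, hpE, hEW, hE⟩ := ih (le_trans (Nat.le_succ n) h2)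
    have hne : E ≠ W := by
      rintro rfl; omega
    obtain ⟨x, hxW, hxE⟩ := SetLike.exists_of_lt (lt_of_le_of_ne hEW hne)
    have hx0 : x ≠ 0 := by rintro rfl; exact hxE E.zero_mem
    have hinf : E ⊓ (ℂ ∙ x) = ⊥ := by
      rw [eq_bot_iff]
      rintro y ⟨hyE, hySpan⟩
      obtain ⟨c, rfl⟩ := Submodule.mem_span_singleton.mp hySpan
      rcases eq_or_ne c 0 with rfl | hc
      · simp
      · exact absurd (by simpa [hc] using E.smul_mem c⁻¹ hyE) hxE
    refine ⟨E ⊔ (ℂ ∙ x), le_trans hpE le_sup_left,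
      sup_le hEW ((Submodule.span_singleton_le_iff_mem _ _).mpr hxW), ?_⟩
    have := Submodule.finrank_sup_add_finrank_inf_eq E (ℂ ∙ x)
    rw [hinf, finrank_bot, finrank_span_singleton hx0, hE] at this
    omega

end aux

/-- let
`Z̃ = {(X,Y,E) ∈ Mat_q² × Gr(r,ℂ^q) : Im X ⊆ E ⊆ ker Y}`.  Then:
(1) over each point `E` of the Grassmannian, the fiber of `Z̃ → Gr(r,ℂ^q)` is a
linear subspace of `Mat_q × Mat_q` of dimension `q²` (so `Z̃` is a vector bundle with
`q²`-dimensional fibers);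
(2) the projection `(X,Y,E) ↦ (X,Y)` maps `Z̃` surjectively onto
`Z = {(X,Y) : rk X ≤ r, rk Y ≤ q-r, YX = 0}`, i.e. `(X,Y) ∈ Z` iff some `E` works;
(3) it is bijective over the locus `rk X = r, rk Y = q-r`: there the `E` is unique. -/
theorem stmt_14 (q r : ℕ) (hr : r ≤ q) :
    (∀ E : Submodule ℂ (Fin q → ℂ), Module.finrank ℂ E = r →
      ∃ S : Submodule ℂ (Matrix (Fin q) (Fin q) ℂ × Matrix (Fin q) (Fin q) ℂ),
        (S : Set (Matrix (Fin q) (Fin q) ℂ × Matrix (Fin q) (Fin q) ℂ))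
            = {p | LinearMap.range p.1.mulVecLin ≤ E ∧ E ≤ LinearMap.ker p.2.mulVecLin} ∧
        Module.finrank ℂ S = q ^ 2) ∧
    (∀ X Y : Matrix (Fin q) (Fin q) ℂ,
      (X.rank ≤ r ∧ Y.rank ≤ q - r ∧ Y * X = 0) ↔
        ∃ E : Submodule ℂ (Fin q → ℂ), Module.finrank ℂ E = r ∧
          LinearMap.range X.mulVecLin ≤ E ∧ E ≤ LinearMap.ker Y.mulVecLin) ∧
    (∀ X Y : Matrix (Fin q) (Fin q) ℂ, X.rank = r → Y.rank = q - r → Y * X = 0 →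
      ∃! E : Submodule ℂ (Fin q → ℂ), Module.finrank ℂ E = r ∧
        LinearMap.range X.mulVecLin ≤ E ∧ E ≤ LinearMap.ker Y.mulVecLin) := by
  have rank_def : ∀ X : Matrix (Fin q) (Fin q) ℂ,
      X.rank = finrank ℂ (LinearMap.range X.mulVecLin) := fun _ => rfl
  have key : ∀ X Y : Matrix (Fin q) (Fin q) ℂ, Y * X = 0 ↔
      LinearMap.range X.mulVecLin ≤ LinearMap.ker Y.mulVecLin := by
    intro X Y
    constructor
    · intro h
      rintro _ ⟨v, rfl⟩
      simp only [LinearMap.mem_ker, mulVecLin_apply, mulVec_mulVec, h, zero_mulVec]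
    · intro h
      have h0 : (Y * X).mulVecLin = 0 := by
        rw [Matrix.mulVecLin_mul]
        refine LinearMap.ext fun v => ?_
        have := h ⟨v, rfl⟩
        rw [LinearMap.mem_ker] at this
        simpa using this
      apply Matrix.toLin'.injective
      rw [Matrix.toLin'_apply', h0, map_zero]
  refine ⟨?_, ?_, ?_⟩
  · -- part 1
    intro E hE
    classical
    -- G1 : Hom(ℂ^q, E) → Mat, f ↦ toMatrix' (subtype ∘ f)
    set G1 : ((Fin q → ℂ) →ₗ[ℂ] E) →ₗ[ℂ] Matrix (Fin q) (Fin q) ℂ :=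
      (LinearMap.toMatrix' : ((Fin q → ℂ) →ₗ[ℂ] (Fin q → ℂ)) ≃ₗ[ℂ] _).toLinearMap ∘ₗ
        LinearMap.llcomp ℂ (Fin q → ℂ) E (Fin q → ℂ) E.subtype with hG1
    set G2 : (((Fin q → ℂ) ⧸ E) →ₗ[ℂ] (Fin q → ℂ)) →ₗ[ℂ] Matrix (Fin q) (Fin q) ℂ :=
      (LinearMap.toMatrix' : ((Fin q → ℂ) →ₗ[ℂ] (Fin q → ℂ)) ≃ₗ[ℂ] _).toLinearMap ∘ₗ
        LinearMap.lcomp ℂ (Fin q → ℂ) E.mkQ with hG2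
    set G := LinearMap.prodMap G1 G2 with hG
    have hGinj : Function.Injective G := by
      rw [hG, LinearMap.coe_prodMap]
      apply Function.Injective.prodMap
      · intro f g hfg
        simp only [hG1, LinearMap.coe_comp, Function.comp_apply, LinearEquiv.coe_coe] at hfg
        have h := LinearMap.toMatrix'.injective hfg
        rw [LinearMap.llcomp_apply', LinearMap.llcomp_apply'] at h
        refine LinearMap.ext fun v => Subtype.ext ?_
        exact LinearMap.congr_fun h v
      · intro f g hfg
        simp only [hG2, LinearMap.coe_comp, Function.comp_apply, LinearEquiv.coe_coe] at hfg
        have h := LinearMap.toMatrix'.injective hfg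
        rw [LinearMap.lcomp_apply', LinearMap.lcomp_apply'] at h
        exact Submodule.linearMap_qext E h
    refine ⟨LinearMap.range G, ?_, ?_⟩
    · ext ⟨X, Y⟩
      simp only [SetLike.mem_coe, LinearMap.mem_range, Set.mem_setOf_eq]
      constructor
      · rintro ⟨⟨f, g⟩, h⟩
        have h1 : X = LinearMap.toMatrix' (E.subtype ∘ₗ f) := congrArg Prod.fst h.symm
        have h2 : Y = LinearMap.toMatrix' (g ∘ₗ E.mkQ) := congrArg Prod.snd h.symm
        constructor
        · rintro _ ⟨v, rfl⟩
          have : X.mulVecLin = E.subtype ∘ₗ f := by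
            rw [h1, ← Matrix.toLin'_apply', Matrix.toLin'_toMatrix']
          rw [this]
          exact (f v).2
        · intro x hx
          have : Y.mulVecLin = g ∘ₗ E.mkQ := by
            rw [h2, ← Matrix.toLin'_apply', Matrix.toLin'_toMatrix']
          rw [LinearMap.mem_ker, this]
          simp [(Submodule.Quotient.mk_eq_zero E).mpr hx]
      · rintro ⟨h1, h2⟩
        refine ⟨(LinearMap.codRestrict E X.mulVecLin fun v => h1 ⟨v, rfl⟩,
          E.liftQ Y.mulVecLin h2), ?_⟩
        have e1 : E.subtype ∘ₗ LinearMap.codRestrict E X.mulVecLin (fun v => h1 ⟨v, rfl⟩)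
            = X.mulVecLin := by ext v; rfl
        have e2 : (E.liftQ Y.mulVecLin h2) ∘ₗ E.mkQ = Y.mulVecLin := E.liftQ_mkQ _ _
        simp only [hG, LinearMap.prodMap_apply, hG1, hG2, LinearMap.coe_comp,
          Function.comp_apply, LinearEquiv.coe_coe, LinearMap.llcomp_apply', LinearMap.lcomp_apply']
        rw [e1, e2, ← Matrix.toLin'_apply', ← Matrix.toLin'_apply',
          LinearMap.toMatrix'_toLin', LinearMap.toMatrix'_toLin']
    · rw [LinearMap.finrank_range_of_inj hGinj, Module.finrank_prod,
        Module.finrank_linearMap, Module.finrank_linearMap, hE]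
      have hq : finrank ℂ (Fin q → ℂ) = q := Module.finrank_fin_fun ℂ
      have hquot : finrank ℂ ((Fin q → ℂ) ⧸ E) = q - r := by
        have := E.finrank_quotient_add_finrank
        rw [hE, hq] at this
        omega
      rw [hq, hquot]
      have : r + (q - r) = q := by omega
      calc q * r + (q - r) * q = q * (r + (q - r)) := by ring
        _ = q ^ 2 := by rw [this]; ring
  · -- part 2
    intro X Y
    constructor
    · rintro ⟨hX, hY, hYX⟩
      have hsub : LinearMap.range X.mulVecLin ≤ LinearMap.ker Y.mulVecLin := (key X Y).mp hYX
      have hker : r ≤ finrank ℂ (LinearMap.ker Y.mulVecLin) := by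
        have := LinearMap.finrank_range_add_finrank_ker Y.mulVecLin
        rw [Module.finrank_fin_fun] at this
        rw [rank_def] at hY
        omega
      obtain ⟨E, h1, h2, h3⟩ := aux_exists_between hsub (by rw [← rank_def]; exact hX) hker
      exact ⟨E, h3, h1, h2⟩
    · rintro ⟨E, hE, h1, h2⟩
      have hXr : X.rank ≤ r := by
        rw [rank_def, ← hE]
        exact Submodule.finrank_mono h1
      have hYr : Y.rank ≤ q - r := by
        have hkr : r ≤ finrank ℂ (LinearMap.ker Y.mulVecLin) := by
          rw [← hE]; exact Submodule.finrank_mono h2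
        have := LinearMap.finrank_range_add_finrank_ker Y.mulVecLin
        rw [Module.finrank_fin_fun] at this
        rw [rank_def]
        omega
      exact ⟨hXr, hYr, (key X Y).mpr (le_trans h1 h2)⟩
  · -- part 3
    intro X Y hX hY hYX
    have hsub : LinearMap.range X.mulVecLin ≤ LinearMap.ker Y.mulVecLin := (key X Y).mp hYX
    refine ⟨LinearMap.range X.mulVecLin, ⟨by rw [← rank_def]; exact hX, le_rfl, hsub⟩, ?_⟩
    rintro E ⟨hE, h1, h2⟩
    symm
    exact Submodule.eq_of_le_of_finrank_eq h1 (by rw [← rank_def, hX, hE])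
end

section
/- The common zero locus W of all partial derivatives of order n−2 of IMM_q^n equals the set of tuples (X_1,...,X_n) ∈ (Mat_q(ℂ))^n such that there exists α with X_β = 0 for all β ∉ {α−1, α} and X_α X_{α−1} = 0. -/
open MvPolynomial

open scoped Classical

namespace Stmt17Aux

variable {σ : Type*} {ι : Type*}

/-- Iterated partial derivative along a list of variables. -/
noncomputable def Dl (L : List σ) (p : MvPolynomial σ ℂ) : MvPolynomial σ ℂ :=
  L.foldl (fun p s => pderiv s p) p

@[simp] lemma Dl_nil (p : MvPolynomial σ ℂ) : Dl [] p = p := rfl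

@[simp] lemma Dl_cons (s : σ) (L : List σ) (p : MvPolynomial σ ℂ) :
    Dl (s :: L) p = Dl L (pderiv s p) := rfl

lemma Dl_zero (L : List σ) : Dl L (0 : MvPolynomial σ ℂ) = 0 := by
  induction L with
  | nil => rfl
  | cons s L ih => simp [ih]

lemma Dl_sum {α : Type*} (L : List σ) (t : Finset α) (f : α → MvPolynomial σ ℂ) :
    Dl L (∑ a ∈ t, f a) = ∑ a ∈ t, Dl L (f a) := by
  induction L generalizing f with
  | nil => rfl
  | cons s L ih => simp [map_sum, ih]

lemma pderiv_prod_X (s : σ) (A : Finset ι) (f : ι → σ) :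
    pderiv s (∏ a ∈ A, (X (f a) : MvPolynomial σ ℂ)) =
      ∑ a ∈ A, if f a = s then ∏ b ∈ A.erase a, (X (f b) : MvPolynomial σ ℂ) else 0 := by
  classical
  induction A using Finset.induction with
  | empty => simp [pderiv_one]
  | insert a A ha ih =>
    rw [Finset.prod_insert ha, pderiv_mul, ih, Finset.sum_insert ha,
      Finset.erase_insert ha]
    congr 1
    · by_cases h : f a = s
      · rw [if_pos h, h, pderiv_X_self, one_mul]
      · rw [if_neg h, pderiv_X_of_ne h, zero_mul]
    · rw [Finset.mul_sum]
      refine Finset.sum_congr rfl fun b hb => ?_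
      have hab : a ≠ b := by rintro rfl; exact ha hb
      rw [mul_ite, mul_zero]
      by_cases hb' : f b = s
      · rw [if_pos hb', if_pos hb', Finset.erase_insert_of_ne hab,
          Finset.prod_insert (fun hm => ha (Finset.mem_of_mem_erase hm))]
      · rw [if_neg hb', if_neg hb']

lemma Dl_prod_X (L : List σ) (A : Finset ι) (f : ι → σ) (hf : Function.Injective f) :
    Dl L (∏ a ∈ A, (X (f a) : MvPolynomial σ ℂ)) =
      if L.Nodup ∧ ∀ s ∈ L, ∃ a ∈ A, f a = s
      then ∏ a ∈ A.filter (fun a => f a ∉ L), (X (f a) : MvPolynomial σ ℂ)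
      else 0 := by
  classical
  induction L generalizing A with
  | nil => simp
  | cons s L ih =>
    rw [Dl_cons, pderiv_prod_X]
    by_cases h : ∃ a ∈ A, f a = s
    · obtain ⟨a₀, ha₀, hfa₀⟩ := h
      have hsum : (∑ a ∈ A, if f a = s then ∏ b ∈ A.erase a, (X (f b) : MvPolynomial σ ℂ)
          else 0) = ∏ b ∈ A.erase a₀, (X (f b) : MvPolynomial σ ℂ) := by
        rw [Finset.sum_eq_single a₀]
        · rw [if_pos hfa₀]
        · intro b _ hne
          exact if_neg fun hfb => hne (hf (hfb.trans hfa₀.symm))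
        · intro h'; exact absurd ha₀ h'
      rw [hsum, ih]
      by_cases hc : L.Nodup ∧ ∀ t ∈ L, ∃ a ∈ A.erase a₀, f a = t
      · have hsL : s ∉ L := by
          intro hsL
          obtain ⟨a, ha, hfa⟩ := hc.2 s hsL
          exact (Finset.ne_of_mem_erase ha) (hf (hfa.trans hfa₀.symm))
        have hcond2 : (s :: L).Nodup ∧ ∀ t ∈ s :: L, ∃ a ∈ A, f a = t := by
          refine ⟨List.nodup_cons.mpr ⟨hsL, hc.1⟩, fun t ht => ?_⟩
          rcases List.mem_cons.mp ht with rfl | ht'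
          · exact ⟨a₀, ha₀, hfa₀⟩
          · obtain ⟨a, ha, hfa⟩ := hc.2 t ht'
            exact ⟨a, Finset.mem_of_mem_erase ha, hfa⟩
        rw [if_pos hc, if_pos hcond2]
        refine Finset.prod_congr ?_ fun _ _ => rfl
        ext a
        simp only [Finset.mem_filter, Finset.mem_erase, List.mem_cons, not_or]
        constructor
        · rintro ⟨⟨hne, haA⟩, hnL⟩
          exact ⟨haA, fun hfa => hne (hf (hfa.trans hfa₀.symm)), hnL⟩
        · rintro ⟨haA, hne, hnL⟩
          exact ⟨⟨fun hrfl => hne (hrfl ▸ hfa₀), haA⟩, hnL⟩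
      · rw [if_neg hc, if_neg]
        rintro ⟨hnd, hall⟩
        have hsL : s ∉ L := (List.nodup_cons.mp hnd).1
        refine hc ⟨(List.nodup_cons.mp hnd).2, fun t ht => ?_⟩
        obtain ⟨a, ha, hfa⟩ := hall t (List.mem_cons_of_mem _ ht)
        refine ⟨a, Finset.mem_erase.mpr ⟨fun hrfl => ?_, ha⟩, hfa⟩
        subst hrfl
        exact hsL ((hfa₀.symm.trans hfa : s = t) ▸ ht)
    · have hsum : (∑ a ∈ A, if f a = s then ∏ b ∈ A.erase a, (X (f b) : MvPolynomial σ ℂ)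
          else 0) = 0 := by
        refine Finset.sum_eq_zero fun a ha => if_neg fun hfa => h ⟨a, ha, hfa⟩
      rw [hsum, Dl_zero, if_neg]
      rintro ⟨-, hall⟩
      exact h (hall s (List.mem_cons_self))


section App

variable {q n : ℕ} [NeZero n]

/-- The variable of `X_δ` selected by the index pattern `ℓ`. -/
def gf (ℓ : Fin n → Fin q) (δ : Fin n) : Fin n × Fin q × Fin q := (δ, ℓ (δ + 1), ℓ δ)

lemma gf_injective (ℓ : Fin n → Fin q) : Function.Injective (gf ℓ) :=
  fun _ _ h => congrArg Prod.fst h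

/-- Compatibility of an index pattern `ℓ` with a list of variables `L`. -/
def cond (L : List (Fin n × Fin q × Fin q)) (ℓ : Fin n → Fin q) : Prop :=
  L.Nodup ∧ ∀ s ∈ L, ℓ (s.1 + 1) = s.2.1 ∧ ℓ s.1 = s.2.2

lemma exists_gf_iff (ℓ : Fin n → Fin q) (s : Fin n × Fin q × Fin q) :
    (∃ a ∈ Finset.univ, gf ℓ a = s) ↔ (ℓ (s.1 + 1) = s.2.1 ∧ ℓ s.1 = s.2.2) := by
  constructor
  · rintro ⟨a, -, rfl⟩; exact ⟨rfl, rfl⟩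
  · rintro ⟨h1, h2⟩
    refine ⟨s.1, Finset.mem_univ _, ?_⟩
    show (s.1, ℓ (s.1 + 1), ℓ s.1) = s
    rw [h1, h2]

open Fin.NatCast in
lemma cast_ne_zero (hn : 4 ≤ n) {k : ℕ} (hk : 0 < k) (hkn : k < n) :
    ((k : ℕ) : Fin n) ≠ 0 := by
  intro h
  rw [Fin.natCast_eq_zero] at h
  exact absurd (Nat.le_of_dvd hk h) (by omega)

lemma eval_Dl_IMM (v : Fin n × Fin q × Fin q → ℂ) (L : List (Fin n × Fin q × Fin q)) :
    eval v (Dl L (IMM q n)) =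
      ∑ ℓ : Fin n → Fin q, if cond L ℓ then
        ∏ δ ∈ Finset.univ.filter (fun δ => gf ℓ δ ∉ L), v (gf ℓ δ) else 0 := by
  rw [IMM, Dl_sum, map_sum]
  refine Finset.sum_congr rfl fun ℓ _ => ?_
  rw [show (∏ α : Fin n, (X (α, ℓ (α + 1), ℓ α) : MvPolynomial (Fin n × Fin q × Fin q) ℂ)) =
      ∏ α ∈ Finset.univ, X (gf ℓ α) from rfl,
    Dl_prod_X _ _ _ (gf_injective ℓ)]
  have hiff : (L.Nodup ∧ ∀ s ∈ L, ∃ a ∈ Finset.univ, gf ℓ a = s) ↔ cond L ℓ := by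
    unfold cond
    simp only [exists_gf_iff]
  by_cases hcond : cond L ℓ
  · rw [if_pos (hiff.mpr hcond), if_pos hcond, map_prod]
    simp only [eval_X]
    congr 1
    ext a
    simp
  · rw [if_neg (fun h => hcond (hiff.mp h)), if_neg hcond, map_zero]

lemma build (S : Finset (Fin n)) (ℓ₁ : Fin n → Fin q) :
    cond (S.toList.map (gf ℓ₁)) ℓ₁ ∧
    ((S.toList.map (gf ℓ₁)).map Prod.fst).toFinset = S ∧
    (S.toList.map (gf ℓ₁)).length = S.card := by
  refine ⟨⟨(Finset.nodup_toList S).map (gf_injective ℓ₁), ?_⟩, ?_, ?_⟩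
  · intro s hs
    obtain ⟨δ, -, rfl⟩ := List.mem_map.mp hs
    exact ⟨rfl, rfl⟩
  · rw [List.map_map, show (Prod.fst ∘ gf ℓ₁) = id from rfl, List.map_id,
      Finset.toList_toFinset]
  · rw [List.length_map, Finset.length_toList]

lemma card_sdiff_pair {a b : Fin n} (hab : a ≠ b) :
    (Finset.univ \ {a, b} : Finset (Fin n)).card = n - 2 := by
  rw [Finset.card_sdiff_of_subset (Finset.subset_univ _), Finset.card_univ, Fintype.card_fin,
    Finset.card_pair hab]

lemma case2 (hn : 4 ≤ n) (v : Fin n × Fin q × Fin q → ℂ) (α : Fin n)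
    (L : List (Fin n × Fin q × Fin q)) (ℓ₁ : Fin n → Fin q) (hc : cond L ℓ₁)
    (hB : (L.map Prod.fst).toFinset = Finset.univ \ {α - 1, α}) :
    eval v (Dl L (IMM q n)) =
      (toMat v α * toMat v (α - 1)) (ℓ₁ (α + 1)) (ℓ₁ (α - 1)) := by
  have h1 : (1 : Fin n) ≠ 0 := by
    simpa using cast_ne_zero hn (k := 1) (by omega) (by omega)
  have h2 : (2 : Fin n) ≠ 0 := by
    simpa using cast_ne_zero hn (k := 2) (by omega) (by omega)
  have hmemB : ∀ δ : Fin n, ¬(δ = α - 1 ∨ δ = α) → ∃ a b, ((δ, a, b) : Fin n × Fin q × Fin q) ∈ L := by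
    intro δ hδ
    have hδB : δ ∈ (L.map Prod.fst).toFinset := by
      rw [hB, Finset.mem_sdiff]
      refine ⟨Finset.mem_univ _, fun hmem => hδ ?_⟩
      simpa using hmem
    obtain ⟨⟨d, a, b⟩, hs, rfl⟩ := List.mem_map.mp (List.mem_toFinset.mp hδB)
    exact ⟨a, b, hs⟩
  have ham : α - 1 ≠ α := fun h => h1 (left_eq_add.mp (sub_eq_iff_eq_add.mp h))
  have hap : α + 1 ≠ α := fun h => h1 (add_eq_left.mp h)
  have ha2 : α - 1 - 1 ≠ α := by
    intro h
    rw [sub_eq_iff_eq_add, sub_eq_iff_eq_add, add_assoc] at h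
    refine h2 ?_
    have h0 : (1 : Fin n) + 1 = 0 := left_eq_add.mp h
    calc (2 : Fin n) = 1 + 1 := by open Fin.CommRing in ring
    _ = 0 := h0
  have ha1m : α - 1 - 1 ≠ α - 1 := fun h =>
    h1 (left_eq_add.mp (sub_eq_iff_eq_add.mp h))
  have key1 : ∀ ℓ : Fin n → Fin q, cond L ℓ → ∀ δ, δ ≠ α → ℓ δ = ℓ₁ δ := by
    intro ℓ hℓ δ hδ
    by_cases hδB : δ = α - 1
    · subst hδB
      obtain ⟨a, b, hab⟩ := hmemB (α - 1 - 1) (by rintro (h | h); exacts [ha1m h, ha2 h])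
      have e1 := (hℓ.2 _ hab).1
      have e2 := (hc.2 _ hab).1
      rw [show (α - 1 - 1 : Fin n) + 1 = α - 1 from sub_add_cancel _ _] at e1 e2
      exact e1.trans e2.symm
    · obtain ⟨a, b, hab⟩ := hmemB δ (by rintro (h | h); exacts [hδB h, hδ h])
      exact ((hℓ.2 _ hab).2).trans ((hc.2 _ hab).2).symm
  have key2 : ∀ k : Fin q, cond L (Function.update ℓ₁ α k) := by
    intro k
    refine ⟨hc.1, fun s hs => ?_⟩
    have hs1 : s.1 ∈ (L.map Prod.fst).toFinset :=
      List.mem_toFinset.mpr (List.mem_map_of_mem hs)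
    rw [hB, Finset.mem_sdiff] at hs1
    have hs1' := hs1.2
    simp only [Finset.mem_insert, Finset.mem_singleton, not_or] at hs1'
    have hne1 : s.1 ≠ α := hs1'.2
    have hne2 : s.1 + 1 ≠ α := fun h => hs1'.1 (eq_sub_iff_add_eq.mpr h)
    rw [Function.update_of_ne hne2, Function.update_of_ne hne1]
    exact hc.2 s hs
  have hfilter : ∀ ℓ : Fin n → Fin q, cond L ℓ →
      Finset.univ.filter (fun δ => gf ℓ δ ∉ L) = {α - 1, α} := by
    intro ℓ hℓ
    ext δ
    simp only [Finset.mem_filter, Finset.mem_univ, true_and, Finset.mem_insert,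
      Finset.mem_singleton]
    constructor
    · intro hnot
      by_contra hδ
      push_neg at hδ
      obtain ⟨a, b, hab⟩ := hmemB δ (by rintro (h | h); exacts [hδ.1 h, hδ.2 h])
      have e := hℓ.2 _ hab
      refine hnot ?_
      show (δ, ℓ (δ + 1), ℓ δ) ∈ L
      rw [e.1, e.2]
      exact hab
    · intro hδ hmem
      have hδB : δ ∈ (L.map Prod.fst).toFinset :=
        List.mem_toFinset.mpr (List.mem_map_of_mem hmem)
      rw [hB, Finset.mem_sdiff] at hδB
      refine hδB.2 ?_
      rcases hδ with rfl | rfl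
      · exact Finset.mem_insert_self _ _
      · exact Finset.mem_insert_of_mem (Finset.mem_singleton_self _)
  rw [eval_Dl_IMM, ← Finset.sum_filter]
  have himg : Finset.univ.filter (cond L) =
      Finset.image (fun k => Function.update ℓ₁ α k) Finset.univ := by
    ext ℓ
    simp only [Finset.mem_filter, Finset.mem_univ, true_and, Finset.mem_image]
    constructor
    · intro hℓ
      refine ⟨ℓ α, ?_⟩
      funext δ
      by_cases hδ : δ = α
      · subst hδ; rw [Function.update_self]
      · rw [Function.update_of_ne hδ]; exact (key1 ℓ hℓ δ hδ).symm
    · rintro ⟨k, rfl⟩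
      exact key2 k
  rw [himg, Finset.sum_image (fun k _ k' _ h => by simpa using congrFun h α)]
  have hterm : ∀ k : Fin q,
      (∏ δ ∈ Finset.univ.filter (fun δ => gf (Function.update ℓ₁ α k) δ ∉ L),
        v (gf (Function.update ℓ₁ α k) δ))
      = v (α, ℓ₁ (α + 1), k) * v (α - 1, k, ℓ₁ (α - 1)) := by
    intro k
    rw [hfilter _ (key2 k), Finset.prod_insert (by simpa using ham),
      Finset.prod_singleton]
    have e1 : gf (Function.update ℓ₁ α k) (α - 1) = (α - 1, k, ℓ₁ (α - 1)) := by
      show (α - 1, Function.update ℓ₁ α k (α - 1 + 1), Function.update ℓ₁ α k (α - 1)) = _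
      rw [sub_add_cancel, Function.update_self, Function.update_of_ne ham]
    have e2 : gf (Function.update ℓ₁ α k) α = (α, ℓ₁ (α + 1), k) := by
      show (α, Function.update ℓ₁ α k (α + 1), Function.update ℓ₁ α k α) = _
      rw [Function.update_self, Function.update_of_ne hap]
    rw [e1, e2, mul_comm]
  calc (∑ k : Fin q, ∏ δ ∈ Finset.univ.filter
        (fun δ => gf (Function.update ℓ₁ α k) δ ∉ L), v (gf (Function.update ℓ₁ α k) δ))
      = ∑ k : Fin q, v (α, ℓ₁ (α + 1), k) * v (α - 1, k, ℓ₁ (α - 1)) :=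
        Finset.sum_congr rfl fun k _ => hterm k
    _ = _ := by rw [Matrix.mul_apply]; rfl

lemma nonadjL (hn : 4 ≤ n) (v : Fin n × Fin q × Fin q → ℂ) (β γ : Fin n)
    (hne : β ≠ γ) (hγβ : γ ≠ β + 1) (hβγ : β ≠ γ + 1)
    (L : List (Fin n × Fin q × Fin q)) (ℓ₁ : Fin n → Fin q) (hc : cond L ℓ₁)
    (hB : (L.map Prod.fst).toFinset = Finset.univ \ {β, γ}) :
    eval v (Dl L (IMM q n)) = v (β, ℓ₁ (β + 1), ℓ₁ β) * v (γ, ℓ₁ (γ + 1), ℓ₁ γ) := by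
  have h1 : (1 : Fin n) ≠ 0 := by
    simpa using cast_ne_zero hn (k := 1) (by omega) (by omega)
  have hmemB : ∀ δ : Fin n, ¬(δ = β ∨ δ = γ) →
      ∃ a b, ((δ, a, b) : Fin n × Fin q × Fin q) ∈ L := by
    intro δ hδ
    have hδB : δ ∈ (L.map Prod.fst).toFinset := by
      rw [hB, Finset.mem_sdiff]
      refine ⟨Finset.mem_univ _, fun hmem => hδ ?_⟩
      simpa using hmem
    obtain ⟨⟨d, a, b⟩, hs, rfl⟩ := List.mem_map.mp (List.mem_toFinset.mp hδB)
    exact ⟨a, b, hs⟩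
  have key1 : ∀ ℓ : Fin n → Fin q, cond L ℓ → ℓ = ℓ₁ := by
    intro ℓ hℓ
    funext δ
    by_cases hδB : δ = β ∨ δ = γ
    · have hsub : ¬(δ - 1 = β ∨ δ - 1 = γ) := by
        rintro (h | h) <;> rw [sub_eq_iff_eq_add] at h
        · rcases hδB with rfl | rfl
          · exact h1 (left_eq_add.mp h)
          · exact hγβ h
        · rcases hδB with rfl | rfl
          · exact hβγ h
          · exact h1 (left_eq_add.mp h)
      obtain ⟨a, b, hab⟩ := hmemB (δ - 1) hsub
      have e1 := (hℓ.2 _ hab).1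
      have e2 := (hc.2 _ hab).1
      rw [show (δ - 1 : Fin n) + 1 = δ from sub_add_cancel _ _] at e1 e2
      exact e1.trans e2.symm
    · obtain ⟨a, b, hab⟩ := hmemB δ hδB
      exact ((hℓ.2 _ hab).2).trans ((hc.2 _ hab).2).symm
  have hfilter : Finset.univ.filter (fun δ => gf ℓ₁ δ ∉ L) = {β, γ} := by
    ext δ
    simp only [Finset.mem_filter, Finset.mem_univ, true_and, Finset.mem_insert,
      Finset.mem_singleton]
    constructor
    · intro hnot
      by_contra hδ
      push_neg at hδ
      obtain ⟨a, b, hab⟩ := hmemB δ (by rintro (h | h); exacts [hδ.1 h, hδ.2 h])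
      have e := hc.2 _ hab
      refine hnot ?_
      show (δ, ℓ₁ (δ + 1), ℓ₁ δ) ∈ L
      rw [e.1, e.2]
      exact hab
    · intro hδ hmem
      have hδB : δ ∈ (L.map Prod.fst).toFinset :=
        List.mem_toFinset.mpr (List.mem_map_of_mem hmem)
      rw [hB, Finset.mem_sdiff] at hδB
      refine hδB.2 ?_
      rcases hδ with rfl | rfl
      · exact Finset.mem_insert_self _ _
      · exact Finset.mem_insert_of_mem (Finset.mem_singleton_self _)
  rw [eval_Dl_IMM, ← Finset.sum_filter]
  have himg : Finset.univ.filter (cond L) = {ℓ₁} := by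
    ext ℓ
    simp only [Finset.mem_filter, Finset.mem_univ, true_and, Finset.mem_singleton]
    exact ⟨fun h => key1 ℓ h, fun h => h ▸ hc⟩
  rw [himg, Finset.sum_singleton, hfilter,
    Finset.prod_insert (by simpa using hne), Finset.prod_singleton]
  rfl


end App

end Stmt17Aux

/-- a point `(X₁,...,Xₙ)` lies in the common zero locus `W` of all
partial derivatives of order `n-2` of `IMM_q^n` (all iterated partials with respect to
`n-2` not necessarily distinct variables) if and only if there exists `α` such that
`X_β = 0` for all `β ∉ {α-1, α}` and `X_α X_{α-1} = 0`. -/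
theorem stmt_17 (q n : ℕ) (hq : 2 ≤ q) (hn : 4 ≤ n) [NeZero n]
    (v : Fin n × Fin q × Fin q → ℂ) :
    (∀ L : List (Fin n × Fin q × Fin q), L.length = n - 2 →
        MvPolynomial.eval v
          (L.foldl (fun p s => MvPolynomial.pderiv s p) (IMM q n)) = 0) ↔
    (∃ α : Fin n, (∀ β : Fin n, β ≠ α - 1 → β ≠ α → toMat v β = 0) ∧
      toMat v α * toMat v (α - 1) = 0) := by
  classical
  have h1 : (1 : Fin n) ≠ 0 := by
    simpa using Stmt17Aux.cast_ne_zero hn (k := 1) (by omega) (by omega)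
  have h2 : (2 : Fin n) ≠ 0 := by
    simpa using Stmt17Aux.cast_ne_zero hn (k := 2) (by omega) (by omega)
  have h3 : (3 : Fin n) ≠ 0 := by
    simpa using Stmt17Aux.cast_ne_zero hn (k := 3) (by omega) (by omega)
  constructor
  · intro H
    have H' : ∀ L : List (Fin n × Fin q × Fin q), L.length = n - 2 →
        eval v (Stmt17Aux.Dl L (IMM q n)) = 0 := H
    have hadj : ∀ α : Fin n, toMat v α * toMat v (α - 1) = 0 := by
      intro α
      have ham : α - 1 ≠ α := fun h => h1 (left_eq_add.mp (sub_eq_iff_eq_add.mp h))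
      have hap1 : α - 1 ≠ α + 1 := by
        intro h
        rw [sub_eq_iff_eq_add, add_assoc] at h
        refine h2 ?_
        have h0 : (1 : Fin n) + 1 = 0 := left_eq_add.mp h
        calc (2 : Fin n) = 1 + 1 := by open Fin.CommRing in ring
        _ = 0 := h0
      ext i j
      set ℓ₁ : Fin n → Fin q :=
        fun δ => if δ = α + 1 then i else if δ = α - 1 then j else i with hℓ₁
      have hv1 : ℓ₁ (α + 1) = i := by simp [hℓ₁]
      have hv2 : ℓ₁ (α - 1) = j := by simp [hℓ₁, hap1]
      obtain ⟨hcond, hBeq, hlen⟩ := Stmt17Aux.build (Finset.univ \ {α - 1, α}) ℓ₁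
      have hval := Stmt17Aux.case2 hn v α _ ℓ₁ hcond hBeq
      rw [hv1, hv2] at hval
      have h0 := H' _ (by rw [hlen, Stmt17Aux.card_sdiff_pair ham])
      simp only [Matrix.zero_apply]
      exact hval.symm.trans h0
    have hnonadj : ∀ β γ : Fin n, β ≠ γ → γ ≠ β + 1 → β ≠ γ + 1 →
        toMat v β = 0 ∨ toMat v γ = 0 := by
      intro β γ hne hγβ hβγ
      have hzero : ∀ a b c d : Fin q, v (β, a, b) * v (γ, c, d) = 0 := by
        intro a b c d
        set ℓ₁ : Fin n → Fin q := fun δ => if δ = β + 1 then a else if δ = β then b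
          else if δ = γ + 1 then c else d with hℓ₁
        have hββ1 : β ≠ β + 1 := fun h => h1 (left_eq_add.mp h)
        have hγγ1 : γ ≠ γ + 1 := fun h => h1 (left_eq_add.mp h)
        have hγ1β1 : γ + 1 ≠ β + 1 := fun h => hne (add_left_injective 1 h).symm
        have hγ1β : γ + 1 ≠ β := fun h => hβγ h.symm
        have e1 : ℓ₁ (β + 1) = a := by simp [hℓ₁]
        have e2 : ℓ₁ β = b := by simp [hℓ₁, hββ1]
        have e3 : ℓ₁ (γ + 1) = c := by simp [hℓ₁, hγ1β1, hγ1β]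
        have e4 : ℓ₁ γ = d := by simp [hℓ₁, hγβ, Ne.symm hne, hγγ1]
        obtain ⟨hcond, hBeq, hlen⟩ := Stmt17Aux.build (Finset.univ \ {β, γ}) ℓ₁
        have hval := Stmt17Aux.nonadjL hn v β γ hne hγβ hβγ _ ℓ₁ hcond hBeq
        rw [e1, e2, e3, e4] at hval
        exact hval.symm.trans (H' _ (by rw [hlen, Stmt17Aux.card_sdiff_pair hne]))
      by_cases hβ0 : toMat v β = 0
      · exact Or.inl hβ0
      · right
        have hex : ∃ a b, v (β, a, b) ≠ 0 := by
          by_contra hno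
          push_neg at hno
          refine hβ0 ?_
          ext a b
          simpa [toMat] using hno a b
        obtain ⟨a, b, hab⟩ := hex
        ext c d
        rcases mul_eq_zero.mp (hzero a b c d) with h | h
        · exact absurd h hab
        · simpa [toMat] using h
    by_cases hall : ∀ β, toMat v β = 0
    · exact ⟨0, fun β _ _ => hall β, by rw [hall 0, zero_mul]⟩
    · push_neg at hall
      obtain ⟨β₀, hβ₀⟩ := hall
      by_cases hnext : toMat v (β₀ + 1) = 0
      · refine ⟨β₀, ?_, hadj β₀⟩
        intro β hβ1 hβ2
        by_contra hβ
        by_cases hb : β = β₀ + 1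
        · exact hβ (hb ▸ hnext)
        · rcases hnonadj β β₀ hβ2 (fun h => hβ1 (eq_sub_iff_add_eq.mpr h.symm)) hb with h | h
          · exact hβ h
          · exact hβ₀ h
      · refine ⟨β₀ + 1, ?_, hadj _⟩
        rw [add_sub_cancel_right]
        intro β hβ1 hβ2
        by_contra hβ
        by_cases hb : β₀ = β + 1
        · have hx2 : β₀ + 1 ≠ β + 1 := by
            intro h
            have hββ : β₀ = β := add_left_injective 1 h
            rw [hββ] at hb
            exact h1 (left_eq_add.mp hb)
          have hx3 : β ≠ (β₀ + 1) + 1 := by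
            intro h
            rw [hb] at h
            rw [add_assoc, add_assoc] at h
            have h30 : (1 : Fin n) + (1 + 1) = 0 := left_eq_add.mp h
            refine h3 ?_
            calc (3 : Fin n) = 1 + (1 + 1) := by open Fin.CommRing in ring
            _ = 0 := h30
          rcases hnonadj β (β₀ + 1) hβ2 hx2 hx3 with h | h
          · exact hβ h
          · exact hnext h
        · rcases hnonadj β β₀ hβ1 hb hβ2 with h | h
          · exact hβ h
          · exact hβ₀ h
  · rintro ⟨α, hsupp, hprod⟩ L hlen
    show eval v (Stmt17Aux.Dl L (IMM q n)) = 0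
    by_cases hex : ∃ ℓ₁, Stmt17Aux.cond L ℓ₁
    · obtain ⟨ℓ₁, hc⟩ := hex
      by_cases hBc : Finset.univ \ (L.map Prod.fst).toFinset ⊆ {α - 1, α}
      · have ham : α - 1 ≠ α := fun h => h1 (left_eq_add.mp (sub_eq_iff_eq_add.mp h))
        have hle : (L.map Prod.fst).toFinset.card ≤ n - 2 := by
          calc (L.map Prod.fst).toFinset.card ≤ (L.map Prod.fst).length :=
                List.toFinset_card_le _
          _ = L.length := List.length_map _
          _ = n - 2 := hlen
        have hgecard : 2 ≤ (Finset.univ \ (L.map Prod.fst).toFinset).card := by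
          rw [Finset.card_sdiff_of_subset (Finset.subset_univ _), Finset.card_univ, Fintype.card_fin]
          omega
        have heq : Finset.univ \ (L.map Prod.fst).toFinset = {α - 1, α} :=
          Finset.eq_of_subset_of_card_le hBc (by rw [Finset.card_pair ham]; exact hgecard)
        have hB : (L.map Prod.fst).toFinset = Finset.univ \ {α - 1, α} := by
          rw [← heq, Finset.sdiff_sdiff_self_left, Finset.univ_inter]
        rw [Stmt17Aux.case2 hn v α L ℓ₁ hc hB, hprod]
        exact Matrix.zero_apply _ _
      · rw [Stmt17Aux.eval_Dl_IMM]
        refine Finset.sum_eq_zero fun ℓ _ => ?_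
        by_cases hcl : Stmt17Aux.cond L ℓ
        · rw [if_pos hcl]
          obtain ⟨δ₀, hδ₀mem, hδ₀no⟩ := Finset.not_subset.mp hBc
          refine Finset.prod_eq_zero (i := δ₀) (Finset.mem_filter.mpr ⟨Finset.mem_univ _, ?_⟩) ?_
          · intro hmem
            exact (Finset.mem_sdiff.mp hδ₀mem).2
              (List.mem_toFinset.mpr (List.mem_map_of_mem hmem))
          · have hδ1 : δ₀ ≠ α - 1 := fun h => hδ₀no (h ▸ Finset.mem_insert_self _ _)
            have hδ2 : δ₀ ≠ α := fun h =>
              hδ₀no (h ▸ Finset.mem_insert_of_mem (Finset.mem_singleton_self _))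
            have hz := hsupp δ₀ hδ1 hδ2
            show toMat v δ₀ (ℓ (δ₀ + 1)) (ℓ δ₀) = 0
            rw [hz]
            exact Matrix.zero_apply _ _
        · rw [if_neg hcl]
    · rw [Stmt17Aux.eval_Dl_IMM]
      exact Finset.sum_eq_zero fun ℓ _ => if_neg (fun h => hex ⟨ℓ, h⟩)
end
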